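/- There is an absolute constant C > 0 with the following property. Let D and e be positive integers, let ν ≥ 0, and let (c_α) be real coefficients indexed by tuples α ∈ {0,1,...,e}^D with α_1 + ··· + α_D = e. Suppose that |Σ_α c_α · z_1^{α_1} ··· z_D^{α_D}| ≤ ν for every z ∈ {1/(e+1), 2/(e+1), ..., 1}^D. Then |c_α| ≤ (C·e)^{C·e·D} · ν for every such α. -/

import Mathlib

open Polynomial Finset

/-- Coefficient bound for products of normalized linear factors. -/
lemma coeff_prod_linear_bound {ι : Type*} [DecidableEq ι] (s : Finset ι) (c w : ι → ℝ)
    (hw : ∀ j ∈ s, |w j| ≤ 1) :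
    ∀ a : ℕ, |(∏ j ∈ s, (C (c j) * (X - C (w j)))).coeff a| ≤ ∏ j ∈ s, (2 * |c j|) := by
  induction s using Finset.induction_on with
  | empty => intro a; cases a <;> simp [Polynomial.coeff_one]
  | insert j s hj ih =>
    intro a
    have hw' : ∀ m ∈ s, |w m| ≤ 1 := fun m hm => hw m (Finset.mem_insert_of_mem hm)
    have ih' := ih hw'
    have hwj : |w j| ≤ 1 := hw j (Finset.mem_insert_self j s)
    set Q := ∏ m ∈ s, (C (c m) * (X - C (w m))) with hQ
    have hB : (0:ℝ) ≤ ∏ m ∈ s, (2 * |c m|) :=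
      Finset.prod_nonneg fun m _ => by positivity
    rw [Finset.prod_insert hj, Finset.prod_insert hj]
    have hrw : C (c j) * (X - C (w j)) * Q = C (c j) * (X * Q - C (w j) * Q) := by ring
    rw [hrw, coeff_C_mul, coeff_sub, coeff_C_mul]
    have h1 : |(X * Q).coeff a| ≤ ∏ m ∈ s, (2 * |c m|) := by
      cases a with
      | zero => simpa using hB
      | succ a => rw [coeff_X_mul]; exact ih' a
    calc |c j * ((X * Q).coeff a - w j * Q.coeff a)|
        = |c j| * |(X * Q).coeff a - w j * Q.coeff a| := abs_mul _ _
      _ ≤ |c j| * (|(X * Q).coeff a| + |w j| * |Q.coeff a|) := by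
          gcongr
          calc |(X * Q).coeff a - w j * Q.coeff a| ≤ |(X * Q).coeff a| + |w j * Q.coeff a| :=
                abs_sub _ _
            _ = |(X * Q).coeff a| + |w j| * |Q.coeff a| := by rw [abs_mul]
      _ ≤ |c j| * (∏ m ∈ s, (2 * |c m|) + 1 * ∏ m ∈ s, (2 * |c m|)) := by
          gcongr; exact ih' a
      _ = 2 * |c j| * ∏ m ∈ s, (2 * |c m|) := by ring

/-- The grid nodes. -/
noncomputable def nodeV (e : ℕ) (j : Fin (e + 1)) : ℝ := (((j : ℕ) : ℝ) + 1) / ((e : ℝ) + 1)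

lemma nodeV_inj (e : ℕ) : Function.Injective (nodeV e) := by
  intro i j h
  have he : ((e : ℝ) + 1) ≠ 0 := by positivity
  have h' : ((i : ℕ) : ℝ) + 1 = ((j : ℕ) : ℝ) + 1 := by
    have h2 := congrArg (· * ((e : ℝ) + 1)) h
    simpa [nodeV, div_mul_cancel₀, he] using h2
  exact Fin.ext (by exact_mod_cast (by linarith : ((i : ℕ) : ℝ) = ((j : ℕ) : ℝ)))

lemma nodeV_abs_le_one (e : ℕ) (j : Fin (e + 1)) : |nodeV e j| ≤ 1 := by
  have h1 : (0:ℝ) < (e : ℝ) + 1 := by positivity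
  have h2 : ((j : ℕ) : ℝ) ≤ (e : ℝ) := by exact_mod_cast Fin.is_le j
  rw [nodeV, abs_of_nonneg (by positivity), div_le_one h1]
  linarith

/-- Key 1D identity: coefficients extracted by Lagrange interpolation. -/
lemma lagrange_coeff_identity (e : ℕ) (a b : Fin (e + 1)) :
    ∑ j : Fin (e + 1), nodeV e j ^ (b : ℕ) *
        (Lagrange.basis Finset.univ (nodeV e) j).coeff (a : ℕ)
      = if (a : ℕ) = (b : ℕ) then 1 else 0 := by
  have hinj : Set.InjOn (nodeV e) ↑(Finset.univ : Finset (Fin (e + 1))) :=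
    (nodeV_inj e).injOn
  have hdeg : (X ^ (b : ℕ) : ℝ[X]).degree < (Finset.univ : Finset (Fin (e + 1))).card := by
    rw [degree_X_pow, Finset.card_univ, Fintype.card_fin]
    exact_mod_cast b.is_lt
  have h := Lagrange.eq_interpolate hinj hdeg
  have h2 := congrArg (fun p : ℝ[X] => p.coeff (a : ℕ)) h
  simp only [Lagrange.interpolate_apply, finset_sum_coeff, coeff_C_mul, coeff_X_pow,
    eval_pow, eval_X] at h2
  rw [← h2]

lemma nodeV_sub_abs_ge (e : ℕ) {j m : Fin (e + 1)} (h : m ≠ j) :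
    ((e : ℝ) + 1)⁻¹ ≤ |nodeV e j - nodeV e m| := by
  have he : (0:ℝ) < (e : ℝ) + 1 := by positivity
  have hsub : nodeV e j - nodeV e m = (((j : ℕ) : ℝ) - ((m : ℕ) : ℝ)) / ((e : ℝ) + 1) := by
    rw [nodeV, nodeV, div_sub_div_same]; ring_nf
  have hne : ((j : ℕ) : ℤ) - ((m : ℕ) : ℤ) ≠ 0 := by
    intro hz
    exact h (Fin.ext (by omega : (m : ℕ) = (j : ℕ)))
  have h1 : (1:ℤ) ≤ |((j : ℕ) : ℤ) - ((m : ℕ) : ℤ)| := Int.one_le_abs hne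
  have h1' : (1:ℝ) ≤ |((j : ℕ) : ℝ) - ((m : ℕ) : ℝ)| := by
    have h2 : ((1:ℤ):ℝ) ≤ ((|((j : ℕ) : ℤ) - ((m : ℕ) : ℤ)| : ℤ) : ℝ) := Int.cast_le.mpr h1
    rw [Int.cast_abs] at h2
    push_cast at h2
    exact h2
  rw [hsub, abs_div, abs_of_pos he, inv_eq_one_div]
  gcongr

lemma basis_coeff_bound (e : ℕ) (j : Fin (e + 1)) (a : ℕ) :
    |(Lagrange.basis Finset.univ (nodeV e) j).coeff a| ≤ (2 * ((e : ℝ) + 1)) ^ e := by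
  have he : (0:ℝ) < (e : ℝ) + 1 := by positivity
  have hcard : (Finset.univ.erase j).card = e := by
    simp [Finset.card_erase_of_mem]
  have hbasis : Lagrange.basis Finset.univ (nodeV e) j
      = ∏ m ∈ Finset.univ.erase j, (C ((nodeV e j - nodeV e m)⁻¹) * (X - C (nodeV e m))) := rfl
  rw [hbasis]
  refine (coeff_prod_linear_bound (Finset.univ.erase j)
      (fun m => (nodeV e j - nodeV e m)⁻¹) (nodeV e)
      (fun m _ => nodeV_abs_le_one e m) a).trans ?_
  calc ∏ m ∈ Finset.univ.erase j, (2 * |(nodeV e j - nodeV e m)⁻¹|)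
      ≤ ∏ m ∈ Finset.univ.erase j, (2 * ((e : ℝ) + 1)) := by
        refine Finset.prod_le_prod (fun m _ => by positivity) (fun m hm => ?_)
        have hmj : m ≠ j := Finset.ne_of_mem_erase hm
        have hge := nodeV_sub_abs_ge e hmj
        have hpos : (0:ℝ) < |nodeV e j - nodeV e m| := lt_of_lt_of_le (by positivity) hge
        rw [abs_inv]
        have hh : |nodeV e j - nodeV e m|⁻¹ ≤ (((e : ℝ) + 1)⁻¹)⁻¹ :=
          inv_anti₀ (by positivity) hge
        rw [inv_inv] at hh
        linarith
    _ = (2 * ((e : ℝ) + 1)) ^ e := by rw [Finset.prod_const, hcard]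

/-- There is an absolute constant `C > 0` with the following property: if a homogeneous
degree-`e` form `∑_α c_α z^α` in `D` variables is at most `ν` in absolute value on the
grid `{1/(e+1), 2/(e+1), …, 1}^D`, then every coefficient satisfies
`|c_α| ≤ (C e)^{C e D} ν`. -/
theorem grid_coefficient_bound :
    ∃ C : ℝ, 0 < C ∧ ∀ (D e : ℕ), 0 < D → 0 < e → ∀ ν : ℝ, 0 ≤ ν →
      ∀ c : (Fin D → Fin (e + 1)) → ℝ,
        (∀ k : Fin D → Fin (e + 1),
          |∑ α ∈ Finset.univ.filter (fun α : Fin D → Fin (e + 1) => ∑ i, (α i : ℕ) = e),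
              c α * ∏ i, (((k i : ℕ) + 1 : ℝ) / ((e : ℝ) + 1)) ^ (α i : ℕ)| ≤ ν) →
        ∀ α : Fin D → Fin (e + 1), (∑ i, (α i : ℕ)) = e →
          |c α| ≤ (C * (e : ℝ)) ^ (C * (e : ℝ) * (D : ℝ)) * ν := by
  refine ⟨4, by norm_num, ?_⟩
  intro D e hD he ν hν c hgrid α₀ hα₀
  classical
  set L : Fin (e + 1) → Fin (e + 1) → ℝ :=
    fun a j => (Lagrange.basis Finset.univ (nodeV e) j).coeff (a : ℕ) with hL
  set c' : (Fin D → Fin (e + 1)) → ℝ :=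
    fun β => if (∑ i, (β i : ℕ)) = e then c β else 0 with hc'
  -- the grid values in terms of c'
  have hnode : ∀ (k : Fin D → Fin (e + 1)) (i : Fin D),
      (((k i : ℕ) + 1 : ℝ) / ((e : ℝ) + 1)) = nodeV e (k i) := fun _ _ => rfl
  have hS : ∀ k : Fin D → Fin (e + 1),
      |∑ β : Fin D → Fin (e + 1), c' β * ∏ i, nodeV e (k i) ^ (β i : ℕ)| ≤ ν := by
    intro k
    have h := hgrid k
    rw [Finset.sum_filter] at h
    simp only [hnode] at h
    simpa only [hc', ite_mul, zero_mul] using h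
  -- inversion identity
  have step1 : ∀ β : Fin D → Fin (e + 1),
      ∑ k : Fin D → Fin (e + 1), ∏ i, (L (α₀ i) (k i) * nodeV e (k i) ^ (β i : ℕ))
        = if β = α₀ then 1 else 0 := by
    intro β
    have hswap := Finset.sum_prod_piFinset (ι := Fin D) Finset.univ
      (fun i x => L (α₀ i) x * nodeV e x ^ (β i : ℕ))
    rw [Fintype.piFinset_univ] at hswap
    rw [hswap]
    by_cases hβ : β = α₀
    · subst hβ
      rw [if_pos rfl]
      refine Finset.prod_eq_one fun i _ => ?_
      have h := lagrange_coeff_identity e (β i) (β i)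
      simpa [mul_comm] using h
    · rw [if_neg hβ]
      obtain ⟨i, hi⟩ : ∃ i, β i ≠ α₀ i := by
        by_contra hcon; push_neg at hcon; exact hβ (funext hcon)
      refine Finset.prod_eq_zero (Finset.mem_univ i) ?_
      have h := lagrange_coeff_identity e (α₀ i) (β i)
      have hne : ¬ ((α₀ i : ℕ) = (β i : ℕ)) := fun hh => hi (Fin.ext hh).symm
      simpa [mul_comm, hne] using h
  have hinv : ∑ k : Fin D → Fin (e + 1),
      (∏ i, L (α₀ i) (k i)) * (∑ β : Fin D → Fin (e + 1), c' β * ∏ i, nodeV e (k i) ^ (β i : ℕ))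
        = c' α₀ := by
    calc ∑ k : Fin D → Fin (e + 1),
          (∏ i, L (α₀ i) (k i)) * (∑ β : Fin D → Fin (e + 1), c' β * ∏ i, nodeV e (k i) ^ (β i : ℕ))
        = ∑ k : Fin D → Fin (e + 1), ∑ β : Fin D → Fin (e + 1),
            c' β * ∏ i, (L (α₀ i) (k i) * nodeV e (k i) ^ (β i : ℕ)) := by
          refine Finset.sum_congr rfl fun k _ => ?_
          rw [Finset.mul_sum]
          refine Finset.sum_congr rfl fun β _ => ?_
          rw [Finset.prod_mul_distrib]; ring
      _ = ∑ β : Fin D → Fin (e + 1),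
            c' β * ∑ k : Fin D → Fin (e + 1), ∏ i, (L (α₀ i) (k i) * nodeV e (k i) ^ (β i : ℕ)) := by
          rw [Finset.sum_comm]
          simp_rw [Finset.mul_sum]
      _ = ∑ β : Fin D → Fin (e + 1), c' β * (if β = α₀ then 1 else 0) := by
          refine Finset.sum_congr rfl fun β _ => ?_
          rw [step1 β]
      _ = c' α₀ := by simp
  -- the bound
  have hM : (0:ℝ) ≤ (2 * ((e : ℝ) + 1)) ^ e := by positivity
  have hcard : (Finset.univ : Finset (Fin D → Fin (e + 1))).card = (e + 1) ^ D := by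
    simp [Finset.card_univ]
  have hcoeff : |c α₀| ≤ ((e : ℝ) + 1) ^ D * ((2 * ((e : ℝ) + 1)) ^ e) ^ D * ν := by
    have hc0 : c α₀ = c' α₀ := by simp only [hc']; rw [if_pos hα₀]
    rw [hc0, ← hinv]
    calc |∑ k : Fin D → Fin (e + 1), (∏ i, L (α₀ i) (k i)) *
            (∑ β : Fin D → Fin (e + 1), c' β * ∏ i, nodeV e (k i) ^ (β i : ℕ))|
        ≤ ∑ k : Fin D → Fin (e + 1), |(∏ i, L (α₀ i) (k i)) *
            (∑ β : Fin D → Fin (e + 1), c' β * ∏ i, nodeV e (k i) ^ (β i : ℕ))| :=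
          Finset.abs_sum_le_sum_abs _ _
      _ ≤ ∑ k : Fin D → Fin (e + 1), ((2 * ((e : ℝ) + 1)) ^ e) ^ D * ν := by
          refine Finset.sum_le_sum fun k _ => ?_
          rw [abs_mul]
          refine mul_le_mul ?_ (hS k) (abs_nonneg _) (by positivity)
          rw [abs_prod]
          calc ∏ i, |L (α₀ i) (k i)| ≤ ∏ _i : Fin D, (2 * ((e : ℝ) + 1)) ^ e :=
                Finset.prod_le_prod (fun i _ => abs_nonneg _)
                  (fun i _ => basis_coeff_bound e (k i) ((α₀ i : ℕ)))
            _ = ((2 * ((e : ℝ) + 1)) ^ e) ^ D := by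
                rw [Finset.prod_const, Finset.card_univ, Fintype.card_fin]
      _ = ((e : ℝ) + 1) ^ D * ((2 * ((e : ℝ) + 1)) ^ e) ^ D * ν := by
          rw [Finset.sum_const, hcard, nsmul_eq_mul]
          push_cast
          ring
  refine hcoeff.trans ?_
  -- numeric estimate
  have he1 : (1:ℝ) ≤ (e : ℝ) := by exact_mod_cast he
  have hA : ((e : ℝ) + 1) * (2 * ((e : ℝ) + 1)) ^ e ≤ (4 * (e : ℝ)) ^ (4 * e) := by
    calc ((e : ℝ) + 1) * (2 * ((e : ℝ) + 1)) ^ e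
        ≤ (2 * ((e : ℝ) + 1)) * (2 * ((e : ℝ) + 1)) ^ e := by
          refine mul_le_mul_of_nonneg_right (by linarith) hM
      _ = (2 * ((e : ℝ) + 1)) ^ (e + 1) := (pow_succ' _ _).symm
      _ ≤ (4 * (e : ℝ)) ^ (e + 1) := by
          refine pow_le_pow_left₀ (by positivity) (by linarith) _
      _ ≤ (4 * (e : ℝ)) ^ (4 * e) := by
          refine pow_le_pow_right₀ (by linarith) (by omega)
  have hrpow : (4 * (e : ℝ)) ^ ((4:ℝ) * (e : ℝ) * (D : ℝ)) = (4 * (e : ℝ)) ^ (4 * e * D : ℕ) := by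
    have hcast : ((4:ℝ)) * (e : ℝ) * (D : ℝ) = ((4 * e * D : ℕ) : ℝ) := by push_cast; ring
    rw [hcast, Real.rpow_natCast]
  rw [hrpow]
  refine mul_le_mul_of_nonneg_right ?_ hν
  calc ((e : ℝ) + 1) ^ D * ((2 * ((e : ℝ) + 1)) ^ e) ^ D
      = (((e : ℝ) + 1) * (2 * ((e : ℝ) + 1)) ^ e) ^ D := (mul_pow _ _ _).symm
    _ ≤ ((4 * (e : ℝ)) ^ (4 * e)) ^ D := by
        refine pow_le_pow_left₀ (by positivity) hA _
    _ = (4 * (e : ℝ)) ^ (4 * e * D : ℕ) := by rw [← pow_mul]
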